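/- Under dichotomous valuations, let A be an envy-freeable allocation, g an unallocated good, and s an agent such that the augmented allocation X = (A_1, ..., A_s ∪ {g}, ..., A_n) is NOT envy-freeable. Then there exist a permutation σ of [n] and an agent k with σ(k) = s such that B := A_σ is envy-freeable with ∑_i v_i(B_i) = ∑_i v_i(A_i) and v_k(A_s ∪ {g}) − v_k(A_s) = 1. -/
import Mathlib


/-- Under dichotomous valuations, let `A` be an envy-freeable
allocation (welfare maximizing over reassignments of its bundles), `g` an
unallocated good, and `s` an agent such that the augmented allocation
`X = (A_1, ..., A_s ∪ {g}, ..., A_n)` is NOT envy-freeable. Then there exist a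
permutation `σ` and an agent `k` with `σ k = s` such that `B := A_σ` is
envy-freeable with the same social welfare as `A`, and
`v k (A s ∪ {g}) - v k (A s) = 1`. -/
theorem find_sink_base_case {n m : ℕ}
    (v : Fin n → Finset (Fin m) → ℝ)
    (hempty : ∀ i, v i ∅ = 0)
    (hdich : ∀ i (S : Finset (Fin m)) (g : Fin m),
        v i (insert g S) - v i S = 0 ∨ v i (insert g S) - v i S = 1)
    (A : Fin n → Finset (Fin m))
    (hdisj : ∀ i j, i ≠ j → Disjoint (A i) (A j))
    (hAfreeable : ∀ τ : Equiv.Perm (Fin n),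
        ∑ i, v i (A (τ i)) ≤ ∑ i, v i (A i))
    (g : Fin m) (hg : ∀ i, g ∉ A i)
    (s : Fin n)
    (hXnot : ¬ ∀ τ : Equiv.Perm (Fin n),
        ∑ i, v i (Function.update A s (insert g (A s)) (τ i)) ≤
          ∑ i, v i (Function.update A s (insert g (A s)) i)) :
    ∃ (σ : Equiv.Perm (Fin n)) (k : Fin n), σ k = s ∧
      (∀ τ : Equiv.Perm (Fin n),
          ∑ i, v i (A (σ (τ i))) ≤ ∑ i, v i (A (σ i))) ∧
      (∑ i, v i (A (σ i)) = ∑ i, v i (A i)) ∧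
      v k (insert g (A s)) - v k (A s) = 1 := by

  push_neg at hXnot
  obtain ⟨τ, hτ⟩ := hXnot
  set k := τ.symm s with hk
  have hτk : τ k = s := τ.apply_symm_apply s
  -- integrality
  have hnat : ∀ i (S : Finset (Fin m)), ∃ N : ℕ, v i S = N := by
    intro i S
    induction S using Finset.induction_on with
    | empty => exact ⟨0, by simp [hempty]⟩
    | @insert a S ha ih =>
        obtain ⟨N, hN⟩ := ih
        rcases hdich i S a with h | h
        · exact ⟨N, by linarith⟩
        · exact ⟨N + 1, by push_cast; linarith⟩
  have hXτ : ∑ i, v i (Function.update A s (insert g (A s)) (τ i))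
      = ∑ i, v i (A (τ i)) + (v k (insert g (A s)) - v k (A s)) := by
    have key : ∀ i : Fin n, v i (Function.update A s (insert g (A s)) (τ i))
        = v i (A (τ i)) + (if i = k then v i (insert g (A s)) - v i (A s) else 0) := by
      intro i
      by_cases h : i = k
      · subst h
        rw [if_pos rfl, hτk, Function.update_self]
        ring
      · have h' : τ i ≠ s := fun hs => h (by simp [hk, ← hs])
        rw [if_neg h, Function.update_of_ne h']
        ring
    rw [Finset.sum_congr rfl fun i _ => key i, Finset.sum_add_distrib,
      Finset.sum_ite_eq' Finset.univ k]
    simp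
  have hXs : ∑ i, v i (Function.update A s (insert g (A s)) i)
      = ∑ i, v i (A i) + (v s (insert g (A s)) - v s (A s)) := by
    have key : ∀ i : Fin n, v i (Function.update A s (insert g (A s)) i)
        = v i (A i) + (if i = s then v i (insert g (A s)) - v i (A s) else 0) := by
      intro i
      by_cases h : i = s
      · subst h
        rw [if_pos rfl, Function.update_self]
        ring
      · rw [if_neg h, Function.update_of_ne h]
        ring
    rw [Finset.sum_congr rfl fun i _ => key i, Finset.sum_add_distrib,
      Finset.sum_ite_eq' Finset.univ s]
    simp
  rw [hXτ, hXs] at hτ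
  have hA' := hAfreeable τ
  have hdk := hdich k (A s) g
  have hds := hdich s (A s) g
  have hdk1 : v k (insert g (A s)) - v k (A s) = 1 := by
    rcases hdk with h | h
    · rcases hds with h2 | h2 <;> linarith
    · exact h
  have hds0 : v s (insert g (A s)) - v s (A s) = 0 := by
    rcases hds with h | h
    · exact h
    · linarith
  rw [hdk1, hds0] at hτ
  -- now ∑ v i (A i) < ∑ v i (A (τ i)) + 1, and ≥; integer => equal
  obtain ⟨N, hN⟩ : ∃ N : ℕ, ∑ i, v i (A i) = (N : ℝ) := by
    choose f hf using fun i => hnat i (A i)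
    exact ⟨∑ i, f i, by push_cast; exact Finset.sum_congr rfl fun i _ => hf i⟩
  obtain ⟨M, hM⟩ : ∃ M : ℕ, ∑ i, v i (A (τ i)) = (M : ℝ) := by
    choose f hf using fun i => hnat i (A (τ i))
    exact ⟨∑ i, f i, by push_cast; exact Finset.sum_congr rfl fun i _ => hf i⟩
  have hMN : M ≤ N := by exact_mod_cast hM ▸ hN ▸ hA'
  have hNM : N < M + 1 := by
    have : (N : ℝ) < (M : ℝ) + 1 := by rw [← hN, ← hM]; linarith
    exact_mod_cast this
  have hEq : ∑ i, v i (A (τ i)) = ∑ i, v i (A i) := by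
    rw [hN, hM]
    congr 1
    omega
  refine ⟨τ, k, hτk, ?_, hEq, hdk1⟩
  intro ρ
  rw [hEq]
  have := hAfreeable (ρ.trans τ)
  simpa [Equiv.trans_apply] using this
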